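/- For x ∈ (-1,1), the function y(t) = (3/(3x^2+1))((t^2 - x^2)/2 - |t - x|) + 1 satisfies ∫_{-1}^{1} y(t) dt = 0, y(x) = 1, and ∫_{-1}^{1} |y'(t)|^2 dt = 6/(3x^2+1), so equality holds in |y(x)|^2 = ((1+3x^2)/6) ∫_{-1}^{1} |y'(t)|^2 dt. -/

import Mathlib

open MeasureTheory

lemma poly_int (a b p q r : ℝ) :
    ∫ t in a..b, (p * t ^ 2 + q * t + r) =
      p * (b ^ 3 - a ^ 3) / 3 + q * (b ^ 2 - a ^ 2) / 2 + r * (b - a) := by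
  have h1 : IntervalIntegrable (fun t : ℝ => p * t ^ 2) volume a b :=
    Continuous.intervalIntegrable (by fun_prop) _ _
  have h2 : IntervalIntegrable (fun t : ℝ => q * t) volume a b :=
    Continuous.intervalIntegrable (by fun_prop) _ _
  have h3 : IntervalIntegrable (fun _ : ℝ => r) volume a b :=
    Continuous.intervalIntegrable (by fun_prop) _ _
  rw [intervalIntegral.integral_add (h1.add h2) h3, intervalIntegral.integral_add h1 h2,
    intervalIntegral.integral_const_mul, intervalIntegral.integral_const_mul,
    intervalIntegral.integral_const, _root_.integral_pow, _root_.integral_id]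
  push_cast
  simp only [smul_eq_mul]
  ring

set_option maxHeartbeats 1000000 in
theorem extremal_m1 (x : ℝ) (hx : x ∈ Set.Ioo (-1:ℝ) 1) :
    let y : ℝ → ℝ := fun t => 3 / (3 * x ^ 2 + 1) * ((t ^ 2 - x ^ 2) / 2 - |t - x|) + 1
    let y' : ℝ → ℝ := fun t => 3 / (3 * x ^ 2 + 1) * (t - (if t < x then -1 else 1))
    (∫ t in (-1:ℝ)..1, y t) = 0 ∧ y x = 1 ∧
    (∫ t in (-1:ℝ)..1, (y' t) ^ 2) = 6 / (3 * x ^ 2 + 1) ∧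
    (y x) ^ 2 = (1 + 3 * x ^ 2) / 6 * ∫ t in (-1:ℝ)..1, (y' t) ^ 2 := by
  intro y y'
  obtain ⟨hx1, hx2⟩ := hx
  have hd : (0:ℝ) < 3 * x ^ 2 + 1 := by positivity
  set c : ℝ := 3 / (3 * x ^ 2 + 1) with hc
  -- y x = 1
  have hyx : y x = 1 := by simp [y]
  -- continuity of y
  have hycont : Continuous y := by
    apply Continuous.add _ continuous_const
    apply Continuous.mul continuous_const
    apply Continuous.sub (by continuity)
    exact (continuous_id.sub continuous_const).abs
  -- first integral
  have hI1 : (∫ t in (-1:ℝ)..x, y t) = c / 2 * (x ^ 3 - (-1:ℝ) ^ 3) / 3 + c * (x ^ 2 - (-1:ℝ) ^ 2) / 2 + (c * (-x ^ 2 / 2 - x) + 1) * (x - (-1)) := by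
    have hcg : ∫ t in (-1:ℝ)..x, y t
        = ∫ t in (-1:ℝ)..x, ((c / 2) * t ^ 2 + c * t + (c * (-x ^ 2 / 2 - x) + 1)) := by
      apply intervalIntegral.integral_congr
      intro t ht
      rw [Set.uIcc_of_le (by linarith)] at ht
      have : |t - x| = x - t := by rw [abs_of_nonpos (by linarith [ht.2])]; ring
      simp only [y, this, hc]
      field_simp
      ring
    rw [hcg, poly_int]
  have hI2 : (∫ t in x..(1:ℝ), y t) = c / 2 * ((1:ℝ) ^ 3 - x ^ 3) / 3 + (-c) * ((1:ℝ) ^ 2 - x ^ 2) / 2 + (c * (-x ^ 2 / 2 + x) + 1) * (1 - x) := by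
    have hcg : ∫ t in x..(1:ℝ), y t
        = ∫ t in x..(1:ℝ), ((c / 2) * t ^ 2 + (-c) * t + (c * (-x ^ 2 / 2 + x) + 1)) := by
      apply intervalIntegral.integral_congr
      intro t ht
      rw [Set.uIcc_of_le (by linarith)] at ht
      have : |t - x| = t - x := by rw [abs_of_nonneg (by linarith [ht.1])]
      simp only [y, this, hc]
      field_simp
      ring
    rw [hcg, poly_int]
  have hyint : (∫ t in (-1:ℝ)..1, y t) = 0 := by
    rw [← intervalIntegral.integral_add_adjacent_intervals
      (hycont.intervalIntegrable (-1) x) (hycont.intervalIntegrable x 1), hI1, hI2, hc]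
    field_simp
    ring
  -- y' integral
  have hae : ∀ᵐ t : ℝ, t ≠ x := by
    have h0 : (volume ({x} : Set ℝ)) = 0 := measure_singleton x
    rw [MeasureTheory.ae_iff]
    convert h0 using 2
    ext t; simp
  have hJ1 : (∫ t in (-1:ℝ)..x, (y' t) ^ 2) = ∫ t in (-1:ℝ)..x, (c ^ 2 * t ^ 2 + 2 * c ^ 2 * t + c ^ 2) := by
    apply intervalIntegral.integral_congr_ae
    filter_upwards [hae] with t htx ht
    rw [Set.uIoc_of_le (by linarith)] at ht
    have hlt : t < x := lt_of_le_of_ne ht.2 htx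
    simp only [y', if_pos hlt]
    ring
  have hJ2 : (∫ t in x..(1:ℝ), (y' t) ^ 2) = ∫ t in x..(1:ℝ), (c ^ 2 * t ^ 2 + (-2) * c ^ 2 * t + c ^ 2) := by
    apply intervalIntegral.integral_congr
    intro t ht
    rw [Set.uIcc_of_le (by linarith)] at ht
    have : ¬ t < x := not_lt.2 ht.1
    simp only [y', if_neg this]
    ring
  have hmem1 : ∀ᵐ t ∂(volume.restrict (Set.uIoc (-1:ℝ) x)), t ∈ Set.uIoc (-1:ℝ) x :=
    ae_restrict_mem measurableSet_uIoc
  have hmem2 : ∀ᵐ t ∂(volume.restrict (Set.uIoc x (1:ℝ))), t ∈ Set.uIoc x (1:ℝ) :=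
    ae_restrict_mem measurableSet_uIoc
  have hint1 : IntervalIntegrable (fun t => (y' t) ^ 2) volume (-1) x := by
    apply IntervalIntegrable.congr_ae (f := fun t : ℝ => c ^ 2 * t ^ 2 + 2 * c ^ 2 * t + c ^ 2)
    · exact Continuous.intervalIntegrable (by fun_prop) _ _
    · filter_upwards [hmem1, ae_restrict_of_ae hae] with t ht htx
      rw [Set.uIoc_of_le (by linarith)] at ht
      have hlt : t < x := lt_of_le_of_ne ht.2 htx
      simp only [y', if_pos hlt]
      ring
  have hint2 : IntervalIntegrable (fun t => (y' t) ^ 2) volume x 1 := by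
    apply IntervalIntegrable.congr_ae (f := fun t : ℝ => c ^ 2 * t ^ 2 + (-2) * c ^ 2 * t + c ^ 2)
    · exact Continuous.intervalIntegrable (by fun_prop) _ _
    · filter_upwards [hmem2] with t ht
      rw [Set.uIoc_of_le (by linarith)] at ht
      have : ¬ t < x := not_lt.2 ht.1.le
      simp only [y', if_neg this]
      ring
  have hy'int : (∫ t in (-1:ℝ)..1, (y' t) ^ 2) = 6 / (3 * x ^ 2 + 1) := by
    rw [← intervalIntegral.integral_add_adjacent_intervals hint1 hint2, hJ1, hJ2,
      poly_int, poly_int, hc]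
    field_simp [hd.ne']
    ring
  refine ⟨hyint, hyx, hy'int, ?_⟩
  rw [hyx, hy'int]
  rw [one_pow]
  field_simp [hd.ne']
  ring
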